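/- arXiv:2405.06223 — 2 statements merged into one kernel-verified Lean document; each statement's English description precedes it below -/
import Mathlib

section
/- Let X and H be real Banach spaces and ι : X → H an injective, continuous, compact linear map. Fix T > 0, K > 0, R > 0, p ∈ [1, ∞) and ϖ ∈ (0, 1]. Let E be the set of u ∈ C([0, T], H) such that (i) ‖u(t)‖_H ≤ K for all t, (ii) ‖u(t) − u(s)‖_H ≤ K |t − s|^ϖ for all s, t ∈ [0, T], and (iii) there exists a measurable v : [0, T] → X with u(t) = ι(v(t)) for almost every t ∈ [0, T] and ∫_0^T ‖v(t)‖_X^p dt ≤ R^p. Then E is relatively compact (totally bounded) in C([0, T], H) equipped with the supremum metric. -/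
open MeasureTheory Filter Set
open scoped ENNReal NNReal Topology

private lemma aubin_key
    {X H : Type*} [NormedAddCommGroup X] [NormedSpace ℝ X] [CompleteSpace X]
    [MeasurableSpace X] [BorelSpace X]
    [NormedAddCommGroup H] [NormedSpace ℝ H] [CompleteSpace H]
    (ι : X →L[ℝ] H)
    {T K R p ϖ : ℝ} (hT : 0 < T) (hK : 0 < K) (hR : 0 < R)
    (hp : 1 ≤ p) (hϖ0 : 0 < ϖ)
    (u : C(Set.Icc (0:ℝ) T, H))
    (hu1 : ∀ t : Set.Icc (0:ℝ) T, ‖u t‖ ≤ K)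
    (hu2 : ∀ s t : Set.Icc (0:ℝ) T, ‖u t - u s‖ ≤ K * |(t:ℝ) - (s:ℝ)| ^ ϖ)
    {v : ℝ → X} (hv1 : Measurable v)
    (hv2 : ∀ᵐ t ∂(volume.restrict (Set.Icc (0:ℝ) T)),
        ∀ h : t ∈ Set.Icc (0:ℝ) T, u ⟨t, h⟩ = ι (v t))
    (hv3 : (∫⁻ t in Set.Icc (0:ℝ) T, ENNReal.ofReal (‖v t‖ ^ p)) ≤ ENNReal.ofReal (R ^ p))
    {δ Λ : ℝ} (hδ0 : 0 < δ) (hδT : δ ≤ T) (hΛ0 : 0 < Λ) (t : Set.Icc (0:ℝ) T) :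
    ∃ z ∈ closure (⇑ι '' Metric.closedBall 0 Λ),
      ‖u t - z‖ ≤ K * δ ^ ϖ + δ⁻¹ * (K * (R ^ p / Λ ^ p)) := by
  obtain ⟨ht0, htT⟩ := t.2
  have hp0 : (0:ℝ) < p := lt_of_lt_of_le one_pos hp
  -- the averaging interval
  set a : ℝ := min (t:ℝ) (T - δ) with ha
  have ha0 : 0 ≤ a := le_min ht0 (by linarith)
  have haδ : a + δ ≤ T := by
    have : a ≤ T - δ := min_le_right _ _
    linarith
  have hta : a ≤ (t:ℝ) := min_le_left _ _
  have htb : (t:ℝ) ≤ a + δ := by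
    rcases le_total ((t:ℝ)) (T - δ) with h | h
    · have : a = (t:ℝ) := min_eq_left h
      linarith
    · have : a = T - δ := min_eq_right h
      linarith
  set J : Set ℝ := Set.Icc a (a + δ) with hJ
  have hJsub : J ⊆ Set.Icc (0:ℝ) T := fun x hx => ⟨le_trans ha0 hx.1, le_trans hx.2 haδ⟩
  have hJvol : volume J = ENNReal.ofReal δ := by
    rw [hJ, Real.volume_Icc, add_sub_cancel_left]
  haveI hJfin : IsFiniteMeasure (volume.restrict J) := by
    constructor
    rw [Measure.restrict_apply_univ, hJvol]
    exact ENNReal.ofReal_lt_top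
  -- the H-valued function ι ∘ v, a.e. equal on J to the continuous extension of u
  set ub : ℝ → H := fun s => ι (v s) with hub
  set f : ℝ → H := fun s => u (Set.projIcc 0 T hT.le s) with hf
  have hfc : Continuous f := u.continuous.comp continuous_projIcc
  have haeJ : ∀ᵐ s ∂(volume.restrict J), ∀ h : s ∈ Set.Icc (0:ℝ) T, u ⟨s, h⟩ = ι (v s) :=
    ae_restrict_of_ae_restrict_of_subset hJsub hv2
  have hmemJ : ∀ᵐ s ∂(volume.restrict J), s ∈ J := ae_restrict_mem measurableSet_Icc
  have haefeq : ∀ᵐ s ∂(volume.restrict J), f s = ub s := by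
    filter_upwards [haeJ, hmemJ] with s hs hsJ
    have hsIcc : s ∈ Set.Icc (0:ℝ) T := hJsub hsJ
    rw [hf]
    simp only [Set.projIcc_of_mem hT.le hsIcc]
    exact hs hsIcc
  have hASM : AEStronglyMeasurable ub (volume.restrict J) :=
    (hfc.aestronglyMeasurable).congr haefeq
  have hbdd : ∀ᵐ s ∂(volume.restrict J), ‖ub s‖ ≤ K := by
    filter_upwards [haeJ, hmemJ] with s hs hsJ
    have hsIcc : s ∈ Set.Icc (0:ℝ) T := hJsub hsJ
    rw [hub]; simp only [← hs hsIcc]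
    exact hu1 _
  have hIntub : Integrable ub (volume.restrict J) :=
    ⟨hASM, HasFiniteIntegral.of_bounded hbdd⟩
  -- truncation
  set A : Set ℝ := {s | ‖v s‖ ≤ Λ} with hA
  have hAm : MeasurableSet A := measurableSet_le hv1.norm measurable_const
  set wb : ℝ → H := A.indicator ub with hwb
  have hASMw : AEStronglyMeasurable wb (volume.restrict J) := hASM.indicator hAm
  have hbddw : ∀ᵐ s ∂(volume.restrict J), ‖wb s‖ ≤ K := by
    filter_upwards [hbdd] with s hs
    exact le_trans (norm_indicator_le_norm_self ub s) hs
  have hIntwb : Integrable wb (volume.restrict J) :=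
    ⟨hASMw, HasFiniteIntegral.of_bounded hbddw⟩
  set z : H := δ⁻¹ • ∫ s in J, wb s with hz
  have hδE0 : ENNReal.ofReal δ ≠ 0 := by simp [ENNReal.ofReal_eq_zero, not_le, hδ0]
  -- z belongs to the closed convex compact set
  refine ⟨z, ?_, ?_⟩
  · set C : Set H := closure (⇑ι '' Metric.closedBall 0 Λ) with hC
    have hconv : Convex ℝ C :=
      ((convex_closedBall (0:X) Λ).is_linear_image ⟨map_add ι, map_smul ι⟩).closure
    set ν : Measure ℝ := (ENNReal.ofReal δ)⁻¹ • volume.restrict J with hν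
    haveI hprob : IsProbabilityMeasure ν := by
      constructor
      rw [hν, Measure.smul_apply, Measure.restrict_apply_univ, hJvol, smul_eq_mul,
        ENNReal.inv_mul_cancel hδE0 ENNReal.ofReal_ne_top]
    have hmemC : ∀ s, wb s ∈ C := by
      intro s
      by_cases hsA : s ∈ A
      · rw [hwb]
        simp only [Set.indicator_of_mem hsA]
        exact subset_closure ⟨v s, by simpa [Metric.mem_closedBall, dist_zero_right] using (show ‖v s‖ ≤ Λ from hsA), rfl⟩
      · rw [hwb]
        simp only [Set.indicator_of_notMem hsA]
        exact subset_closure ⟨0, by simp [hΛ0.le], by simp⟩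
    have hIntν : Integrable wb ν :=
      hIntwb.smul_measure (by simp [hδE0])
    have hzν : ∫ s, wb s ∂ν = z := by
      rw [hν, integral_smul_measure, hz, ENNReal.toReal_inv, ENNReal.toReal_ofReal hδ0.le]
    rw [← hzν]
    exact hconv.integral_mem isClosed_closure (Eventually.of_forall hmemC) hIntν
  · -- the distance estimate
    set z0 : H := δ⁻¹ • ∫ s in J, ub s with hz0
    have est1 : ‖u t - z0‖ ≤ K * δ ^ ϖ := by
      have hdiff : u t - z0 = δ⁻¹ • ∫ s in J, (u t - ub s) := by
        rw [integral_sub (integrable_const _) hIntub, smul_sub, setIntegral_const, measureReal_def, hJvol,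
          ENNReal.toReal_ofReal hδ0.le, smul_smul, inv_mul_cancel₀ hδ0.ne', one_smul, hz0]
      have hbound : ∀ᵐ s ∂(volume.restrict J), ‖u t - ub s‖ ≤ K * δ ^ ϖ := by
        filter_upwards [haeJ, hmemJ] with s hs hsJ
        have hsIcc : s ∈ Set.Icc (0:ℝ) T := hJsub hsJ
        rw [hub]
        simp only [← hs hsIcc]
        have habs : |(t:ℝ) - s| ≤ δ := by
          rw [abs_sub_le_iff]
          exact ⟨by linarith [hsJ.1, htb], by linarith [hsJ.2, hta]⟩
        calc ‖u t - u ⟨s, hsIcc⟩‖ ≤ K * |(t:ℝ) - s| ^ ϖ := hu2 ⟨s, hsIcc⟩ t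
          _ ≤ K * δ ^ ϖ :=
            mul_le_mul_of_nonneg_left (Real.rpow_le_rpow (abs_nonneg _) habs hϖ0.le) hK.le
      rw [hdiff, norm_smul, norm_inv, Real.norm_of_nonneg hδ0.le]
      have hnb := norm_integral_le_of_norm_le (integrable_const (K * δ ^ ϖ)) hbound
      calc δ⁻¹ * ‖∫ s in J, (u t - ub s)‖ ≤ δ⁻¹ * ∫ _ in J, K * δ ^ ϖ :=
            mul_le_mul_of_nonneg_left hnb (by positivity)
        _ = δ⁻¹ * (δ * (K * δ ^ ϖ)) := by
            rw [setIntegral_const, measureReal_def, hJvol, ENNReal.toReal_ofReal hδ0.le, smul_eq_mul]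
        _ = K * δ ^ ϖ := by field_simp
    have est2 : ‖z0 - z‖ ≤ δ⁻¹ * (K * (R ^ p / Λ ^ p)) := by
      -- Chebyshev bound on the bad set
      have hcheb : volume.restrict J Aᶜ ≤ ENNReal.ofReal (R ^ p / Λ ^ p) := by
        have hsub : Aᶜ ∩ J ⊆ {s | ENNReal.ofReal (Λ ^ p) ≤ ENNReal.ofReal (‖v s‖ ^ p)}
            ∩ Set.Icc (0:ℝ) T := by
          rintro s ⟨hs1, hs2⟩
          refine ⟨?_, hJsub hs2⟩
          have : Λ ≤ ‖v s‖ := le_of_not_ge hs1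
          exact ENNReal.ofReal_le_ofReal (Real.rpow_le_rpow hΛ0.le this hp0.le)
        have hmeas : AEMeasurable (fun s => ENNReal.ofReal (‖v s‖ ^ p))
            (volume.restrict (Set.Icc (0:ℝ) T)) :=
          (((Real.continuous_rpow_const hp0.le).measurable.comp hv1.norm).ennreal_ofReal).aemeasurable
        have hch := mul_meas_ge_le_lintegral₀ hmeas (ENNReal.ofReal (Λ ^ p))
        have hΛp0 : ENNReal.ofReal (Λ ^ p) ≠ 0 := by
          simp only [ne_eq, ENNReal.ofReal_eq_zero, not_le]
          positivity
        calc volume.restrict J Aᶜ = volume (Aᶜ ∩ J) := by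
              rw [Measure.restrict_apply hAm.compl]
          _ ≤ volume ({s | ENNReal.ofReal (Λ ^ p) ≤ ENNReal.ofReal (‖v s‖ ^ p)}
              ∩ Set.Icc (0:ℝ) T) := measure_mono hsub
          _ = volume.restrict (Set.Icc (0:ℝ) T)
              {s | ENNReal.ofReal (Λ ^ p) ≤ ENNReal.ofReal (‖v s‖ ^ p)} := by
              rw [Measure.restrict_apply']
              exact measurableSet_Icc
          _ ≤ ENNReal.ofReal (R ^ p) / ENNReal.ofReal (Λ ^ p) := by
              rw [ENNReal.le_div_iff_mul_le (Or.inl hΛp0) (Or.inl ENNReal.ofReal_ne_top)]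
              calc volume.restrict (Set.Icc (0:ℝ) T) _ * ENNReal.ofReal (Λ ^ p)
                  = ENNReal.ofReal (Λ ^ p) * volume.restrict (Set.Icc (0:ℝ) T) _ := mul_comm _ _
                _ ≤ _ := le_trans hch hv3
          _ = ENNReal.ofReal (R ^ p / Λ ^ p) := by
              rw [ENNReal.ofReal_div_of_pos (by positivity)]
      have hdiff2 : z0 - z = δ⁻¹ • ∫ s in J, (Aᶜ.indicator ub) s := by
        rw [hz0, hz, ← smul_sub, ← integral_sub hIntub hIntwb]
        congr 1
        refine integral_congr_ae (Eventually.of_forall fun s => ?_)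
        rw [Set.indicator_compl]
        rfl
      have hbound2 : ∀ᵐ s ∂(volume.restrict J),
          ‖(Aᶜ.indicator ub) s‖ ≤ (Aᶜ.indicator (fun _ => K)) s := by
        filter_upwards [hbdd] with s hs
        by_cases hsA : s ∈ Aᶜ
        · rw [Set.indicator_of_mem hsA, Set.indicator_of_mem hsA]
          exact hs
        · rw [Set.indicator_of_notMem hsA, Set.indicator_of_notMem hsA, norm_zero]
      have hIntb : Integrable (Aᶜ.indicator (fun _ => K)) (volume.restrict J) :=
        (integrable_const K).indicator hAm.compl
      have hnb2 := norm_integral_le_of_norm_le hIntb hbound2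
      have hval : ∫ s in J, (Aᶜ.indicator (fun _ => K)) s
          = (volume.restrict J Aᶜ).toReal • K := integral_indicator_const K hAm.compl
      rw [hdiff2, norm_smul, norm_inv, Real.norm_of_nonneg hδ0.le]
      have htoR : (volume.restrict J Aᶜ).toReal ≤ R ^ p / Λ ^ p := by
        have := ENNReal.toReal_mono ENNReal.ofReal_ne_top hcheb
        rwa [ENNReal.toReal_ofReal (by positivity)] at this
      calc δ⁻¹ * ‖∫ s in J, (Aᶜ.indicator ub) s‖
          ≤ δ⁻¹ * ((volume.restrict J Aᶜ).toReal • K) := by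
            rw [← hval]
            exact mul_le_mul_of_nonneg_left hnb2 (by positivity)
        _ ≤ δ⁻¹ * (K * (R ^ p / Λ ^ p)) := by
            rw [smul_eq_mul]
            refine mul_le_mul_of_nonneg_left ?_ (by positivity)
            rw [mul_comm]
            exact mul_le_mul_of_nonneg_left htoR hK.le
    calc ‖u t - z‖ = ‖(u t - z0) + (z0 - z)‖ := by rw [sub_add_sub_cancel]
      _ ≤ ‖u t - z0‖ + ‖z0 - z‖ := norm_add_le _ _
      _ ≤ K * δ ^ ϖ + δ⁻¹ * (K * (R ^ p / Λ ^ p)) := add_le_add est1 est2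

/-- Aubin–Lions/Arzelà–Ascoli-type compactness: let `ι : X → H` be an injective, continuous,
compact linear map between Banach spaces. The set of `u ∈ C([0,T], H)` that are bounded by
`K`, `ϖ`-Hölder with constant `K`, and a.e. equal to `ι ∘ v` for some measurable
`v : [0,T] → X` with `∫_0^T ‖v‖_X^p ≤ R^p`, is totally bounded in `C([0,T], H)` with the
supremum metric. -/
theorem aubin_lions_totallyBounded
    {X H : Type*} [NormedAddCommGroup X] [NormedSpace ℝ X] [CompleteSpace X]
    [MeasurableSpace X] [BorelSpace X]
    [NormedAddCommGroup H] [NormedSpace ℝ H] [CompleteSpace H]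
    (ι : X →L[ℝ] H) (hinj : Function.Injective ι)
    (hcomp : ∀ s : Set X, Bornology.IsBounded s → IsCompact (closure (⇑ι '' s)))
    (T K R p ϖ : ℝ) (hT : 0 < T) (hK : 0 < K) (hR : 0 < R)
    (hp : 1 ≤ p) (hϖ0 : 0 < ϖ) (hϖ1 : ϖ ≤ 1) :
    TotallyBounded { u : C(Set.Icc (0 : ℝ) T, H) |
      (∀ t : Set.Icc (0 : ℝ) T, ‖u t‖ ≤ K) ∧
      (∀ s t : Set.Icc (0 : ℝ) T, ‖u t - u s‖ ≤ K * |(t : ℝ) - (s : ℝ)| ^ ϖ) ∧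
      (∃ v : ℝ → X, Measurable v ∧
        (∀ᵐ t ∂(volume.restrict (Set.Icc (0 : ℝ) T)),
          ∀ h : t ∈ Set.Icc (0 : ℝ) T, u ⟨t, h⟩ = ι (v t)) ∧
        (∫⁻ t in Set.Icc (0 : ℝ) T, ENNReal.ofReal (‖v t‖ ^ p)) ≤
          ENNReal.ofReal (R ^ p)) } := by
  have hp0 : (0:ℝ) < p := lt_of_lt_of_le one_pos hp
  set E : Set C(Set.Icc (0 : ℝ) T, H) := { u : C(Set.Icc (0 : ℝ) T, H) |
      (∀ t : Set.Icc (0 : ℝ) T, ‖u t‖ ≤ K) ∧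
      (∀ s t : Set.Icc (0 : ℝ) T, ‖u t - u s‖ ≤ K * |(t : ℝ) - (s : ℝ)| ^ ϖ) ∧
      (∃ v : ℝ → X, Measurable v ∧
        (∀ᵐ t ∂(volume.restrict (Set.Icc (0 : ℝ) T)),
          ∀ h : t ∈ Set.Icc (0 : ℝ) T, u ⟨t, h⟩ = ι (v t)) ∧
        (∫⁻ t in Set.Icc (0 : ℝ) T, ENNReal.ofReal (‖v t‖ ^ p)) ≤
          ENNReal.ofReal (R ^ p)) } with hE
  -- the set of all values of members of `E` is totally bounded
  set V : Set H := {h : H | ∃ u ∈ E, ∃ x, u x = h} with hV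
  have hVtb : TotallyBounded V := by
    rw [Metric.totallyBounded_iff]
    intro ε hε
    -- choose the mollification scale δ
    set δ : ℝ := min T ((ε / (4*K)) ^ (1/ϖ)) with hδ
    have hδ0 : 0 < δ := lt_min hT (Real.rpow_pos_of_pos (by positivity) _)
    have hδT : δ ≤ T := min_le_left _ _
    have hδε : K * δ ^ ϖ ≤ ε / 4 := by
      have h1 : δ ^ ϖ ≤ ((ε / (4*K)) ^ (1/ϖ)) ^ ϖ :=
        Real.rpow_le_rpow hδ0.le (min_le_right _ _) hϖ0.le
      have h2 : ((ε / (4*K)) ^ (1/ϖ)) ^ ϖ = ε / (4*K) := by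
        rw [← Real.rpow_mul (by positivity), one_div_mul_cancel hϖ0.ne', Real.rpow_one]
      calc K * δ ^ ϖ ≤ K * (ε/(4*K)) := by
            rw [← h2]; exact mul_le_mul_of_nonneg_left h1 hK.le
        _ = ε/4 := by field_simp
    -- choose the truncation level Λ
    have hRp : (0:ℝ) < R ^ p := Real.rpow_pos_of_pos hR p
    set c : ℝ := 4 * K * R ^ p / (δ * ε) with hc
    have hc0 : 0 < c := by positivity
    set Λ : ℝ := max 1 (c ^ (1/p)) with hΛ
    have hΛ0 : (0:ℝ) < Λ := lt_of_lt_of_le one_pos (le_max_left _ _)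
    have hΛc : c ≤ Λ ^ p := by
      have h1 : (c ^ (1/p)) ^ p ≤ Λ ^ p :=
        Real.rpow_le_rpow (by positivity) (le_max_right _ _) hp0.le
      have h2 : (c ^ (1/p)) ^ p = c := by
        rw [← Real.rpow_mul hc0.le, one_div_mul_cancel hp0.ne', Real.rpow_one]
      linarith
    have hΛε : δ⁻¹ * (K * (R ^ p / Λ ^ p)) ≤ ε / 4 := by
      have hΛp0 : (0:ℝ) < Λ ^ p := Real.rpow_pos_of_pos hΛ0 p
      have h1 : R ^ p / Λ ^ p ≤ R ^ p / c :=
        div_le_div_of_nonneg_left hRp.le hc0 hΛc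
      have h2 : δ⁻¹ * (K * (R ^ p / c)) = ε / 4 := by
        rw [hc]; field_simp
      calc δ⁻¹ * (K * (R ^ p / Λ ^ p)) ≤ δ⁻¹ * (K * (R ^ p / c)) := by
            refine mul_le_mul_of_nonneg_left ?_ (by positivity)
            exact mul_le_mul_of_nonneg_left h1 hK.le
        _ = ε / 4 := h2
    -- the compact set and its finite net
    have hC : IsCompact (closure (⇑ι '' Metric.closedBall 0 Λ)) :=
      hcomp _ Metric.isBounded_closedBall
    obtain ⟨F, hFfin, hFcov⟩ := (Metric.totallyBounded_iff.1 hC.totallyBounded) (ε/2)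
      (by positivity)
    refine ⟨F, hFfin, ?_⟩
    rintro h ⟨u, hu, x, rfl⟩
    obtain ⟨hu1, hu2, v, hv1, hv2, hv3⟩ := hu
    obtain ⟨z, hzC, hz⟩ := aubin_key ι hT hK hR hp hϖ0 u hu1 hu2 hv1 hv2 hv3 hδ0 hδT hΛ0 x
    obtain ⟨cF, hcF, hcz⟩ := Set.mem_iUnion₂.1 (hFcov hzC)
    refine Set.mem_iUnion₂.2 ⟨cF, hcF, ?_⟩
    rw [Metric.mem_ball] at hcz ⊢
    calc dist (u x) cF ≤ dist (u x) z + dist z cF := dist_triangle _ _ _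
      _ < ε/2 + ε/2 := by
          refine add_lt_add_of_le_of_lt ?_ hcz
          rw [dist_eq_norm]
          calc ‖u x - z‖ ≤ K * δ ^ ϖ + δ⁻¹ * (K * (R ^ p / Λ ^ p)) := hz
            _ ≤ ε/4 + ε/4 := add_le_add hδε hΛε
            _ = ε/2 := by ring
      _ = ε := by ring
  have hS : IsCompact (closure V) :=
    hVtb.closure.isCompact_of_isClosed isClosed_closure
  -- transfer to bounded continuous functions and apply Arzelà–Ascoli
  set e := ContinuousMap.isometryEquivBoundedOfCompact (Set.Icc (0:ℝ) T) H with he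
  have hin : ∀ (f : BoundedContinuousFunction (Set.Icc (0:ℝ) T) H) (x : Set.Icc (0:ℝ) T),
      f ∈ ⇑e '' E → f x ∈ closure V := by
    rintro f x ⟨u, hu, rfl⟩
    refine subset_closure ?_
    exact ⟨u, hu, x, rfl⟩
  have heqc : Equicontinuous ((↑) : (⇑e '' E) → Set.Icc (0:ℝ) T → H) := by
    refine Metric.equicontinuous_of_continuity_modulus (fun d => K * |d| ^ ϖ) ?_ _ ?_
    · have hcont : Continuous (fun d : ℝ => K * |d| ^ ϖ) :=
        continuous_const.mul (continuous_abs.rpow_const (fun x => Or.inr hϖ0.le))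
      have h0 : K * |(0:ℝ)| ^ ϖ = 0 := by
        simp [Real.zero_rpow hϖ0.ne']
      have := hcont.tendsto 0
      rwa [h0] at this
    · rintro x y ⟨f, ⟨u, hu, rfl⟩⟩
      obtain ⟨hu1, hu2, -⟩ := hu
      have hxy : dist x y = |(x:ℝ) - (y:ℝ)| := by
        rw [Subtype.dist_eq, Real.dist_eq]
      have : dist (u x) (u y) ≤ K * |(x:ℝ) - (y:ℝ)| ^ ϖ := by
        rw [dist_eq_norm]
        exact hu2 y x
      simpa [hxy, abs_abs] using (show dist ((e u) x) ((e u) y) ≤ K * |(x:ℝ) - (y:ℝ)| ^ ϖ from this)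
  have hAcpt : IsCompact (closure (⇑e '' E)) :=
    BoundedContinuousFunction.arzela_ascoli (closure V) hS (⇑e '' E) hin heqc
  have hAtb : TotallyBounded (⇑e '' E) := hAcpt.totallyBounded.subset subset_closure
  have hErw : E = ⇑e.symm '' (⇑e '' E) := by
    rw [Set.image_image]
    simp
  rw [hE] at hErw ⊢
  rw [hErw]
  exact hAtb.image e.symm.isometry.uniformContinuous
end

section
/- Let X and H be real Banach spaces and ι : X → H an injective, continuous, compact linear map, let (Ω, F, P) be a probability space, and fix T > 0, p ∈ [1, ∞), ϖ ∈ (0, 1] and M > 0. Let u : Ω × [0, T] → H be a process with continuous sample paths, and suppose there exist: a random variable ℜ ≥ 0 with E ℜ² ≤ M such that almost surely ‖u(t)‖_H ≤ ℜ and ‖u(t) − u(s)‖_H ≤ ℜ |t − s|^ϖ for all s, t ∈ [0, T]; and a measurable process v : Ω × [0, T] → X with u(t) = ι(v(t)) for almost every t almost surely and E ∫_0^T ‖v(t)‖_X^p dt ≤ M. Then for every ε > 0 there exists a compact set 𝒰 ⊆ H such that P( u(t) ∈ 𝒰 for all t ∈ [0, T] ) ≥ 1 − ε. -/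
open MeasureTheory Filter Set
open scoped ENNReal NNReal Topology Pointwise

/-- Tightness of trajectories: let `ι : X → H` be an injective, continuous, compact linear
map between Banach spaces and `u` a continuous-path `H`-valued process on `[0,T]` which is
a.s. bounded and `ϖ`-Hölder with a constant `ℜ` satisfying `E ℜ² ≤ M`, and a.e. equal to
`ι ∘ v` for a jointly measurable `X`-valued process `v` with `E ∫_0^T ‖v‖_X^p ≤ M`.
Then for every `ε > 0` there is a compact `𝒰 ⊆ H` such that with probability at least
`1 − ε` the whole trajectory stays in `𝒰`. -/
theorem trajectories_stay_in_compact_set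
    {X H Ω : Type*} [NormedAddCommGroup X] [NormedSpace ℝ X] [CompleteSpace X]
    [MeasurableSpace X] [BorelSpace X]
    [NormedAddCommGroup H] [NormedSpace ℝ H] [CompleteSpace H]
    [MeasurableSpace Ω] (P : Measure Ω) [IsProbabilityMeasure P]
    (ι : X →L[ℝ] H) (hinj : Function.Injective ι)
    (hcomp : ∀ s : Set X, Bornology.IsBounded s → IsCompact (closure (⇑ι '' s)))
    (T p ϖ M : ℝ) (hT : 0 < T) (hp : 1 ≤ p) (hϖ0 : 0 < ϖ) (hϖ1 : ϖ ≤ 1) (hM : 0 < M)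
    (u : Ω → ℝ → H) (hucont : ∀ ω, ContinuousOn (u ω) (Set.Icc 0 T))
    (R : Ω → ℝ) (hRmeas : Measurable R) (hR0 : ∀ ω, 0 ≤ R ω)
    (hR2 : ∫⁻ ω, ENNReal.ofReal ((R ω) ^ 2) ∂P ≤ ENNReal.ofReal M)
    (hbound : ∀ᵐ ω ∂P, ∀ t ∈ Set.Icc (0 : ℝ) T, ‖u ω t‖ ≤ R ω)
    (hholder : ∀ᵐ ω ∂P, ∀ s ∈ Set.Icc (0 : ℝ) T, ∀ t ∈ Set.Icc (0 : ℝ) T,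
      ‖u ω t - u ω s‖ ≤ R ω * |t - s| ^ ϖ)
    (v : Ω → ℝ → X) (hvmeas : Measurable (Function.uncurry v))
    (huv : ∀ᵐ ω ∂P, ∀ᵐ t ∂(volume.restrict (Set.Icc (0 : ℝ) T)), u ω t = ι (v ω t))
    (hvint : ∫⁻ ω, (∫⁻ t in Set.Icc (0 : ℝ) T, ENNReal.ofReal (‖v ω t‖ ^ p)) ∂P ≤
      ENNReal.ofReal M) :
    ∀ ε : ℝ, 0 < ε → ∃ 𝒰 : Set H, IsCompact 𝒰 ∧
      ENNReal.ofReal (1 - ε) ≤ P { ω | ∀ t ∈ Set.Icc (0 : ℝ) T, u ω t ∈ 𝒰 } := by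
  intro ε hε
  by_cases hε1 : 1 ≤ ε
  · exact ⟨∅, isCompact_empty, by
      rw [ENNReal.ofReal_of_nonpos (by linarith)]; exact zero_le⟩
  push_neg at hε1
  have hp0 : (0 : ℝ) < p := lt_of_lt_of_le one_pos hp
  -- constants
  set S : ℝ := 2 * M / ε with hSdef
  have hS0 : 0 < S := by positivity
  set K : ℝ := Real.sqrt S with hKdef
  have hK0 : 0 ≤ K := Real.sqrt_nonneg _
  have hK2 : K ^ 2 = S := Real.sq_sqrt hS0.le
  have hMS : M / S = ε / 2 := by
    rw [hSdef]; field_simp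
  -- scales
  set δ : ℕ → ℝ := fun n => min (1 / (n + 1)) T with hδdef
  have hδ0 : ∀ n, 0 < δ n := fun n => lt_min (by positivity) hT
  have hδT : ∀ n, δ n ≤ T := fun n => min_le_right _ _
  set C : ℕ → ℝ := fun n => (2 * S / δ n) ^ p⁻¹ with hCdef
  set r : ℕ → ℝ := fun n => K * δ n ^ ϖ with hrdef
  -- the compact set
  set A : ℕ → Set H :=
    fun n => closure (⇑ι '' Metric.closedBall 0 (C n)) + Metric.closedBall (0 : H) (r n)
    with hAdef
  set 𝒰 : Set H := closure (⋂ n, A n) with h𝒰def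
  have hAcomp : ∀ n, IsCompact (closure (⇑ι '' Metric.closedBall 0 (C n))) :=
    fun n => hcomp _ Metric.isBounded_closedBall
  -- r n can be made small
  have hrlim : ∀ ε' : ℝ, 0 < ε' → ∃ n, r n < ε' := by
    intro ε' hε'
    have hKp : (0 : ℝ) < K + 1 := by linarith
    obtain ⟨n, hn⟩ := exists_nat_one_div_lt
      (show (0 : ℝ) < (ε' / (K + 1)) ^ ϖ⁻¹ by positivity)
    refine ⟨n, ?_⟩
    have hδn : δ n < (ε' / (K + 1)) ^ ϖ⁻¹ := lt_of_le_of_lt (min_le_left _ _) hn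
    have h1 : δ n ^ ϖ < ((ε' / (K + 1)) ^ ϖ⁻¹) ^ ϖ :=
      Real.rpow_lt_rpow (hδ0 n).le hδn hϖ0
    rw [Real.rpow_inv_rpow (by positivity) (ne_of_gt hϖ0)] at h1
    have h2 : r n ≤ (K + 1) * δ n ^ ϖ :=
      mul_le_mul_of_nonneg_right (by linarith) (Real.rpow_nonneg (hδ0 n).le _)
    calc r n ≤ (K + 1) * δ n ^ ϖ := h2
      _ < (K + 1) * (ε' / (K + 1)) := by exact mul_lt_mul_of_pos_left h1 hKp
      _ = ε' := by field_simp
  have h𝒰comp : IsCompact 𝒰 := by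
    refine TotallyBounded.isCompact_of_isClosed ?_ isClosed_closure
    refine TotallyBounded.closure ?_
    rw [Metric.totallyBounded_iff]
    intro ε' hε'
    obtain ⟨n, hn⟩ := hrlim (ε' / 2) (by positivity)
    obtain ⟨t, htfin, htcov⟩ :=
      Metric.totallyBounded_iff.mp (hAcomp n).totallyBounded (ε' / 2) (by positivity)
    refine ⟨t, htfin, fun x hx => ?_⟩
    have hx' : x ∈ A n := Set.mem_iInter.mp hx n
    obtain ⟨a, ha, b, hb, rfl⟩ := Set.mem_add.mp hx'
    obtain ⟨c, hc, hac⟩ := Set.mem_iUnion₂.mp (htcov ha)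
    refine Set.mem_iUnion₂.mpr ⟨c, hc, ?_⟩
    rw [Metric.mem_ball] at hac ⊢
    have hbn : ‖b‖ ≤ r n := mem_closedBall_zero_iff.mp hb
    have hd : dist (a + b) c ≤ dist a c + ‖b‖ := by
      rw [dist_eq_norm, dist_eq_norm]
      calc ‖a + b - c‖ = ‖a - c + b‖ := by rw [show a + b - c = a - c + b by abel]
        _ ≤ ‖a - c‖ + ‖b‖ := norm_add_le _ _
    linarith
  refine ⟨𝒰, h𝒰comp, ?_⟩
  -- the integral functional is measurable
  set f : Ω → ℝ≥0∞ := fun ω => ∫⁻ t in Set.Icc (0 : ℝ) T, ENNReal.ofReal (‖v ω t‖ ^ p)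
    with hfdef
  have hfm : Measurable f := by
    have : Measurable fun q : Ω × ℝ => ENNReal.ofReal (‖Function.uncurry v q‖ ^ p) :=
      (hvmeas.norm.pow_const p).ennreal_ofReal
    exact this.lintegral_prod_right'
  -- the good event
  set Aset : Set Ω := {ω | R ω ≤ K} with hAsetdef
  set Bset : Set Ω := {ω | f ω ≤ ENNReal.ofReal S} with hBsetdef
  have hAm : MeasurableSet Aset := measurableSet_le hRmeas measurable_const
  have hBm : MeasurableSet Bset := measurableSet_le hfm measurable_const
  have hAc : P Asetᶜ ≤ ENNReal.ofReal (ε / 2) := by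
    have hsub : Asetᶜ ⊆ {ω | ENNReal.ofReal S ≤ ENNReal.ofReal (R ω ^ 2)} := by
      intro ω hω
      have h1 : K < R ω := not_le.mp hω
      have h2 : K ^ 2 < R ω ^ 2 := by
        have := mul_lt_mul'' h1 h1 hK0 hK0
        nlinarith
      exact ENNReal.ofReal_le_ofReal (by rw [← hK2]; exact h2.le)
    calc P Asetᶜ ≤ P {ω | ENNReal.ofReal S ≤ ENNReal.ofReal (R ω ^ 2)} := measure_mono hsub
      _ ≤ (∫⁻ ω, ENNReal.ofReal (R ω ^ 2) ∂P) / ENNReal.ofReal S :=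
        meas_ge_le_lintegral_div ((hRmeas.pow_const 2).ennreal_ofReal).aemeasurable
          (by simp [ENNReal.ofReal_eq_zero, not_le, hS0]) ENNReal.ofReal_ne_top
      _ ≤ ENNReal.ofReal M / ENNReal.ofReal S := by
        exact ENNReal.div_le_div_right hR2 _
      _ = ENNReal.ofReal (M / S) := (ENNReal.ofReal_div_of_pos hS0).symm
      _ = ENNReal.ofReal (ε / 2) := by rw [hMS]
  have hBc : P Bsetᶜ ≤ ENNReal.ofReal (ε / 2) := by
    have hsub : Bsetᶜ ⊆ {ω | ENNReal.ofReal S ≤ f ω} := by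
      intro ω hω
      simp only [hBsetdef, Set.mem_compl_iff, Set.mem_setOf_eq, not_le] at hω
      exact hω.le
    calc P Bsetᶜ ≤ P {ω | ENNReal.ofReal S ≤ f ω} := measure_mono hsub
      _ ≤ (∫⁻ ω, f ω ∂P) / ENNReal.ofReal S :=
        meas_ge_le_lintegral_div hfm.aemeasurable
          (by simp [ENNReal.ofReal_eq_zero, not_le, hS0]) ENNReal.ofReal_ne_top
      _ ≤ ENNReal.ofReal M / ENNReal.ofReal S := ENNReal.div_le_div_right hvint _
      _ = ENNReal.ofReal (M / S) := (ENNReal.ofReal_div_of_pos hS0).symm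
      _ = ENNReal.ofReal (ε / 2) := by rw [hMS]
  have hG : ENNReal.ofReal (1 - ε) ≤ P (Aset ∩ Bset) := by
    have hcompl : P (Aset ∩ Bset)ᶜ ≤ ENNReal.ofReal ε := by
      rw [Set.compl_inter]
      calc P (Asetᶜ ∪ Bsetᶜ) ≤ P Asetᶜ + P Bsetᶜ := measure_union_le _ _
        _ ≤ ENNReal.ofReal (ε / 2) + ENNReal.ofReal (ε / 2) := add_le_add hAc hBc
        _ = ENNReal.ofReal ε := by
          rw [← ENNReal.ofReal_add (by positivity) (by positivity)]; ring_nf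
    have heq : P (Aset ∩ Bset)ᶜ = 1 - P (Aset ∩ Bset) :=
      prob_compl_eq_one_sub (hAm.inter hBm)
    rw [heq] at hcompl
    have h1 : 1 - ENNReal.ofReal ε ≤ P (Aset ∩ Bset) := by
      have := tsub_le_iff_right.mp hcompl
      exact tsub_le_iff_right.mpr (by rwa [add_comm])
    calc ENNReal.ofReal (1 - ε) = ENNReal.ofReal 1 - ENNReal.ofReal ε :=
          ENNReal.ofReal_sub 1 hε.le
      _ = 1 - ENNReal.ofReal ε := by rw [ENNReal.ofReal_one]
      _ ≤ P (Aset ∩ Bset) := h1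
  -- key pointwise claim
  have key : ∀ ω, ω ∈ Aset → ω ∈ Bset →
      (∀ s ∈ Set.Icc (0 : ℝ) T, ∀ t ∈ Set.Icc (0 : ℝ) T,
        ‖u ω t - u ω s‖ ≤ R ω * |t - s| ^ ϖ) →
      (∀ᵐ t ∂(volume.restrict (Set.Icc (0 : ℝ) T)), u ω t = ι (v ω t)) →
      ∀ t ∈ Set.Icc (0 : ℝ) T, u ω t ∈ 𝒰 := by
    intro ω hA hB hHol hUV t ht
    refine subset_closure (Set.mem_iInter.mpr fun n => ?_)
    set a : ℝ := min t (T - δ n) with hadef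
    have ha0 : 0 ≤ a := le_min ht.1 (by linarith [hδT n])
    have haT : a + δ n ≤ T := by
      have := min_le_right t (T - δ n); linarith
    have htI : t ∈ Set.Icc a (a + δ n) := by
      constructor
      · exact min_le_left _ _
      · rcases min_cases t (T - δ n) with ⟨h1, h2⟩ | ⟨h1, h2⟩
        · rw [hadef, h1]; linarith [(hδ0 n)]
        · rw [hadef, h1]; linarith [ht.2]
    have hIsub : Set.Icc a (a + δ n) ⊆ Set.Icc (0 : ℝ) T := Set.Icc_subset_Icc ha0 haT
    set c : ℝ := 2 * S / δ n with hcdef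
    have hc0 : 0 < c := by positivity
    have hSc : S / c = δ n / 2 := by
      rw [hcdef]; field_simp
    -- find a good time s close to t
    have hgood : ∃ s ∈ Set.Icc a (a + δ n), ‖v ω s‖ ^ p < c ∧ u ω s = ι (v ω s) := by
      by_contra hcon
      push_neg at hcon
      have hsub : Set.Icc a (a + δ n) ⊆
          ({s | ENNReal.ofReal c ≤ ENNReal.ofReal (‖v ω s‖ ^ p)} ∩ Set.Icc a (a + δ n)) ∪
          ({s | ¬ u ω s = ι (v ω s)} ∩ Set.Icc (0 : ℝ) T) := by
        intro s hs
        by_cases h1 : ‖v ω s‖ ^ p < c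
        · exact Or.inr ⟨hcon s hs h1, hIsub hs⟩
        · exact Or.inl ⟨ENNReal.ofReal_le_ofReal (not_lt.mp h1), hs⟩
      have hvsm : Measurable fun s => ENNReal.ofReal (‖v ω s‖ ^ p) :=
        ((hvmeas.of_uncurry_left (x := ω)).norm.pow_const p).ennreal_ofReal
      have hm1 : volume ({s | ENNReal.ofReal c ≤ ENNReal.ofReal (‖v ω s‖ ^ p)} ∩
          Set.Icc a (a + δ n)) ≤ ENNReal.ofReal (δ n / 2) := by
        rw [← Measure.restrict_apply' measurableSet_Icc]
        calc (volume.restrict (Set.Icc a (a + δ n)))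
              {s | ENNReal.ofReal c ≤ ENNReal.ofReal (‖v ω s‖ ^ p)}
            ≤ (∫⁻ s in Set.Icc a (a + δ n), ENNReal.ofReal (‖v ω s‖ ^ p)) /
              ENNReal.ofReal c :=
            meas_ge_le_lintegral_div hvsm.aemeasurable
              (by simp [ENNReal.ofReal_eq_zero, not_le, hc0]) ENNReal.ofReal_ne_top
          _ ≤ ENNReal.ofReal S / ENNReal.ofReal c := by
            refine ENNReal.div_le_div_right ?_ _
            exact le_trans (lintegral_mono_set hIsub) hB
          _ = ENNReal.ofReal (S / c) := (ENNReal.ofReal_div_of_pos hc0).symm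
          _ = ENNReal.ofReal (δ n / 2) := by rw [hSc]
      have hm2 : volume ({s | ¬ u ω s = ι (v ω s)} ∩ Set.Icc (0 : ℝ) T) = 0 := by
        rw [← Measure.restrict_apply' measurableSet_Icc]
        exact ae_iff.mp hUV
      have hvol : volume (Set.Icc a (a + δ n)) ≤ ENNReal.ofReal (δ n / 2) := by
        calc volume (Set.Icc a (a + δ n)) ≤ _ := measure_mono hsub
          _ ≤ _ + _ := measure_union_le _ _
          _ ≤ ENNReal.ofReal (δ n / 2) + 0 := add_le_add hm1 hm2.le
          _ = ENNReal.ofReal (δ n / 2) := by rw [add_zero]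
      rw [Real.volume_Icc, show a + δ n - a = δ n by ring] at hvol
      have := (ENNReal.ofReal_le_ofReal_iff (by positivity)).mp hvol
      linarith [hδ0 n]
    obtain ⟨s, hsI, hvs, hus⟩ := hgood
    -- v ω s lies in the ball of radius C n
    have hvC : ‖v ω s‖ ≤ C n := by
      have h1 : (0 : ℝ) ≤ ‖v ω s‖ := norm_nonneg _
      calc ‖v ω s‖ = (‖v ω s‖ ^ p) ^ p⁻¹ := (Real.rpow_rpow_inv h1 (ne_of_gt hp0)).symm
        _ ≤ c ^ p⁻¹ := Real.rpow_le_rpow (Real.rpow_nonneg h1 p) hvs.le (by positivity)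
        _ = C n := rfl
    have h1 : ι (v ω s) ∈ closure (⇑ι '' Metric.closedBall 0 (C n)) :=
      subset_closure (Set.mem_image_of_mem _ (mem_closedBall_zero_iff.mpr hvC))
    have hts : |t - s| ≤ δ n := by
      rw [abs_le]
      constructor <;> [linarith [hsI.2, htI.1]; linarith [hsI.1, htI.2]]
    have h2 : u ω t - u ω s ∈ Metric.closedBall (0 : H) (r n) := by
      rw [mem_closedBall_zero_iff]
      calc ‖u ω t - u ω s‖ ≤ R ω * |t - s| ^ ϖ := hHol s (hIsub hsI) t ht
        _ ≤ K * δ n ^ ϖ :=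
          mul_le_mul hA (Real.rpow_le_rpow (abs_nonneg _) hts hϖ0.le)
            (Real.rpow_nonneg (abs_nonneg _) _) hK0
    have heq : u ω t = ι (v ω s) + (u ω t - u ω s) := by rw [← hus]; abel
    rw [heq]
    exact Set.add_mem_add h1 h2
  -- put everything together
  set E : Set Ω := {ω | (∀ s ∈ Set.Icc (0 : ℝ) T, ∀ t ∈ Set.Icc (0 : ℝ) T,
      ‖u ω t - u ω s‖ ≤ R ω * |t - s| ^ ϖ) ∧
      (∀ᵐ t ∂(volume.restrict (Set.Icc (0 : ℝ) T)), u ω t = ι (v ω t))} with hEdef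
  have hEc : P Eᶜ = 0 := by
    have : ∀ᵐ ω ∂P, ω ∈ E := hholder.and huv
    exact ae_iff.mp this
  have hsub : Aset ∩ Bset ∩ E ⊆ {ω | ∀ t ∈ Set.Icc (0 : ℝ) T, u ω t ∈ 𝒰} :=
    fun ω ⟨⟨hA, hB⟩, hE⟩ => key ω hA hB hE.1 hE.2
  calc ENNReal.ofReal (1 - ε) ≤ P (Aset ∩ Bset) := hG
    _ ≤ P (Aset ∩ Bset ∩ E) + P ((Aset ∩ Bset) ∩ Eᶜ) := by
        refine le_trans (measure_mono ?_) (measure_union_le _ _)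
        intro ω hω
        by_cases h : ω ∈ E
        · exact Or.inl ⟨hω, h⟩
        · exact Or.inr ⟨hω, h⟩
    _ ≤ P (Aset ∩ Bset ∩ E) + P Eᶜ :=
        add_le_add le_rfl (measure_mono Set.inter_subset_right)
    _ = P (Aset ∩ Bset ∩ E) := by rw [hEc, add_zero]
    _ ≤ P {ω | ∀ t ∈ Set.Icc (0 : ℝ) T, u ω t ∈ 𝒰} := measure_mono hsub
end
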